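/- Fix a sequence of valuations (s_t,b_t) ∈ [0,1]^2 for t = 1,...,T. Let p* be a best fixed price, i.e., a maximizer of p ↦ Σ_t GFT_t(p,p), and let γ* be any probability distribution on [0,1]^2 satisfying E_{(p,q)∼γ*}[Σ_{t=1}^T REV_t(p,q)] ≥ 0. Then E_{(p,q)∼γ*}[Σ_{t=1}^T GFT_t(p,q)] ≤ 2·Σ_{t=1}^T GFT_t(p*, p*). -/

import Mathlib

open Finset MeasureTheory

noncomputable def gft (s b p q : ℝ) : ℝ :=
  (if s ≤ p then (1:ℝ) else 0) * (if q ≤ b then (1:ℝ) else 0) * (b - s)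

noncomputable def rev (s b p q : ℝ) : ℝ :=
  (if s ≤ p then (1:ℝ) else 0) * (if q ≤ b then (1:ℝ) else 0) * (q - p)

lemma key_ineq (s b p q : ℝ) : gft s b p q + rev s b p q ≤ gft s b p p + gft s b q q := by
  unfold gft rev
  split_ifs <;> (try push_neg at *) <;> nlinarith

lemma gft_abs_le (s b p q : ℝ) (hs : s ∈ Set.Icc (0:ℝ) 1) (hb : b ∈ Set.Icc (0:ℝ) 1) :
    |gft s b p q| ≤ 1 := by
  obtain ⟨hs0, hs1⟩ := hs; obtain ⟨hb0, hb1⟩ := hb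
  unfold gft
  split_ifs <;> simp [abs_le] <;> constructor <;> linarith

lemma rev_abs_le (s b p q : ℝ) (hp : p ∈ Set.Icc (0:ℝ) 1) (hq : q ∈ Set.Icc (0:ℝ) 1) :
    |rev s b p q| ≤ 1 := by
  obtain ⟨hp0, hp1⟩ := hp; obtain ⟨hq0, hq1⟩ := hq
  unfold rev
  split_ifs <;> simp [abs_le] <;> constructor <;> linarith

lemma gft_meas (s b : ℝ) : Measurable (fun pq : ℝ × ℝ => gft s b pq.1 pq.2) := by
  unfold gft
  exact ((Measurable.ite (measurableSet_le measurable_const measurable_fst)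
      measurable_const measurable_const).mul
    (Measurable.ite (measurableSet_le measurable_snd measurable_const)
      measurable_const measurable_const)).mul measurable_const

lemma rev_meas (s b : ℝ) : Measurable (fun pq : ℝ × ℝ => rev s b pq.1 pq.2) := by
  unfold rev
  exact ((Measurable.ite (measurableSet_le measurable_const measurable_fst)
      measurable_const measurable_const).mul
    (Measurable.ite (measurableSet_le measurable_snd measurable_const)
      measurable_const measurable_const)).mul (measurable_snd.sub measurable_fst)

theorem stmt_14 (T : ℕ) (s b : ℕ → ℝ)
    (hvals : ∀ t, s t ∈ Set.Icc (0:ℝ) 1 ∧ b t ∈ Set.Icc (0:ℝ) 1)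
    (pstar : ℝ) (hpstar : pstar ∈ Set.Icc (0:ℝ) 1)
    (hbest : ∀ p ∈ Set.Icc (0:ℝ) 1,
      ∑ t ∈ range T, gft (s t) (b t) p p ≤ ∑ t ∈ range T, gft (s t) (b t) pstar pstar)
    (γ : Measure (ℝ × ℝ)) [IsProbabilityMeasure γ]
    (hsupp : γ {pq : ℝ × ℝ | ¬ (pq.1 ∈ Set.Icc (0:ℝ) 1 ∧ pq.2 ∈ Set.Icc (0:ℝ) 1)} = 0)
    (hrev : 0 ≤ ∫ pq, (∑ t ∈ range T, rev (s t) (b t) pq.1 pq.2) ∂γ) :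
    ∫ pq, (∑ t ∈ range T, gft (s t) (b t) pq.1 pq.2) ∂γ ≤
      2 * ∑ t ∈ range T, gft (s t) (b t) pstar pstar := by
  set OPT := ∑ t ∈ range T, gft (s t) (b t) pstar pstar with hOPT
  set G : ℝ × ℝ → ℝ := fun pq => ∑ t ∈ range T, gft (s t) (b t) pq.1 pq.2 with hG
  set R : ℝ × ℝ → ℝ := fun pq => ∑ t ∈ range T, rev (s t) (b t) pq.1 pq.2 with hR
  have hae : ∀ᵐ pq ∂γ, pq.1 ∈ Set.Icc (0:ℝ) 1 ∧ pq.2 ∈ Set.Icc (0:ℝ) 1 :=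
    ae_iff.mpr hsupp
  have mG : Measurable G := Finset.measurable_sum _ (fun t _ => gft_meas (s t) (b t))
  have mR : Measurable R := Finset.measurable_sum _ (fun t _ => rev_meas (s t) (b t))
  have hGbound : ∀ pq : ℝ × ℝ, |G pq| ≤ (T : ℝ) := by
    intro pq
    calc |G pq| ≤ ∑ t ∈ range T, |gft (s t) (b t) pq.1 pq.2| := Finset.abs_sum_le_sum_abs _ _
    _ ≤ ∑ t ∈ range T, (1:ℝ) := Finset.sum_le_sum (fun t _ =>
        gft_abs_le _ _ _ _ (hvals t).1 (hvals t).2)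
    _ = (T : ℝ) := by simp
  have hRbound : ∀ᵐ pq ∂γ, |R pq| ≤ (T : ℝ) := by
    filter_upwards [hae] with pq hpq
    calc |R pq| ≤ ∑ t ∈ range T, |rev (s t) (b t) pq.1 pq.2| := Finset.abs_sum_le_sum_abs _ _
    _ ≤ ∑ t ∈ range T, (1:ℝ) := Finset.sum_le_sum (fun t _ =>
        rev_abs_le _ _ _ _ hpq.1 hpq.2)
    _ = (T : ℝ) := by simp
  have hGint : Integrable G γ :=
    (integrable_const (T : ℝ)).mono' mG.aestronglyMeasurable (ae_of_all _ hGbound)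
  have hRint : Integrable R γ :=
    (integrable_const (T : ℝ)).mono' mR.aestronglyMeasurable hRbound
  have hmono : ∀ᵐ pq ∂γ, G pq ≤ 2 * OPT - R pq := by
    filter_upwards [hae] with pq hpq
    have h1 : G pq + R pq ≤ (∑ t ∈ range T, gft (s t) (b t) pq.1 pq.1)
        + (∑ t ∈ range T, gft (s t) (b t) pq.2 pq.2) := by
      rw [hG, hR, ← Finset.sum_add_distrib, ← Finset.sum_add_distrib]
      exact Finset.sum_le_sum (fun t _ => key_ineq _ _ _ _)
    have h2 := hbest pq.1 hpq.1
    have h3 := hbest pq.2 hpq.2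
    linarith
  have := integral_mono_ae hGint ((integrable_const (2 * OPT)).sub hRint) hmono
  simp only [Pi.sub_apply] at this
  rw [integral_sub (integrable_const _) hRint, integral_const] at this
  simp at this
  linarith
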